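/- With S_n ~ N(0, (σ₁²+σ₂²)n/2) and a_n = √((σ₁²+σ₂²) log 2)·n − (√(σ₁²+σ₂²)/(4√(log 2)))·log n, there exists a constant c₄ > 0 independent of n such that 2^n · P(S_n ∈ [a_n, a_n + 1]) ≥ c₄ for all sufficiently large even n. -/

import Mathlib

open MeasureTheory ProbabilityTheory

open Real Filter in
lemma aux_ineq (s2 A B : ℝ) (hs2 : 0 < s2) (hA2 : A^2 = s2 * Real.log 2)
    (hAB : A * B = s2 / 4) (hBpos : 0 < B)
    (n : ℕ) (hn1 : 1 ≤ (n:ℝ))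
    (hcond : B^2 * (Real.log n)^2 + 1 ≤ s2 * n) :
    Real.exp (-(2*A/s2) - 1) / Real.sqrt (Real.pi * s2) ≤
      (2:ℝ)^n * ((Real.sqrt (2 * Real.pi * (s2 * n / 2)))⁻¹ *
        Real.exp (-((A*n - B*Real.log n + 1) - 0)^2 / (2 * (s2 * n / 2)))) := by
  have hnpos : (0:ℝ) < n := lt_of_lt_of_le one_pos hn1
  set L : ℝ := Real.log n with hL
  have hLnn : 0 ≤ L := Real.log_nonneg hn1
  have hpi : (0:ℝ) < Real.pi := Real.pi_pos
  have hsqrt : Real.sqrt (2 * Real.pi * (s2 * n / 2)) = Real.sqrt (Real.pi * s2) * Real.sqrt n := by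
    rw [← Real.sqrt_mul (by positivity)]
    ring_nf
  have h2n : (2:ℝ)^n = Real.exp (n * Real.log 2) := by
    rw [Real.exp_nat_mul, Real.exp_log two_pos]
  have hsn : Real.sqrt (n:ℝ) = Real.exp (L/2) := by
    rw [Real.sqrt_eq_rpow, Real.rpow_def_of_pos hnpos]
    ring_nf
    rfl
  have expand : (A*n - B*L + 1)^2
      = s2*Real.log 2*(n:ℝ)^2 - (s2/2)*n*L + 2*A*n + B^2*L^2 - 2*B*L + 1 := by
    linear_combination ((n:ℝ))^2 * hA2 - 2*(n:ℝ)*L*hAB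
  have hkey : (A*n - B*L + 1)^2 / (s2 * n)
      = n * Real.log 2 - L/2 + 2*A/s2 + (B^2*L^2 - 2*B*L + 1)/(s2*n) := by
    rw [expand]; field_simp; ring
  have hr : (B^2*L^2 - 2*B*L + 1)/(s2*n) ≤ 1 := by
    rw [div_le_one (by positivity)]
    nlinarith [mul_nonneg hBpos.le hLnn]
  have hexp : -((A*n - B*L + 1) - 0)^2 / (2 * (s2 * n / 2)) = -((A*n - B*L + 1)^2 / (s2*n)) := by
    field_simp
    ring
  rw [hexp, hkey, hsqrt, h2n, hsn]
  set r : ℝ := (B^2*L^2 - 2*B*L + 1)/(s2*n) with hrdef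
  have comb : Real.exp (n * Real.log 2) *
        ((Real.sqrt (Real.pi*s2) * Real.exp (L/2))⁻¹ *
          Real.exp (-(n*Real.log 2 - L/2 + 2*A/s2 + r)))
      = Real.exp (n*Real.log 2 + (-(L/2)) + (-(n*Real.log 2 - L/2 + 2*A/s2 + r)))
          * (Real.sqrt (Real.pi*s2))⁻¹ := by
    rw [Real.exp_add, Real.exp_add, Real.exp_neg (L/2), mul_inv]; ring
  rw [comb, div_eq_mul_inv]
  refine mul_le_mul_of_nonneg_right (Real.exp_le_exp.mpr ?_) (by positivity)
  linarith [hr]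

open Real Filter in
/-- the expected number of particles in [a_n, a_n+1] is bounded
below, for large even n. -/
theorem stmt10 (σ1 σ2 : ℝ) (h1 : 0 < σ1) (h2 : 0 < σ2) :
    ∃ c4 : ℝ, 0 < c4 ∧ ∃ N0 : ℕ, ∀ n : ℕ, N0 ≤ n → Even n →
      c4 ≤ (2:ℝ)^n *
        ((gaussianReal 0 (Real.toNNReal ((σ1^2 + σ2^2)*n/2)))
          (Set.Icc
            (Real.sqrt ((σ1^2 + σ2^2) * Real.log 2) * n
              - (Real.sqrt (σ1^2 + σ2^2)/(4*Real.sqrt (Real.log 2))) * Real.log n)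
            (Real.sqrt ((σ1^2 + σ2^2) * Real.log 2) * n
              - (Real.sqrt (σ1^2 + σ2^2)/(4*Real.sqrt (Real.log 2))) * Real.log n
              + 1))).toReal := by
  set s2 : ℝ := σ1^2 + σ2^2 with hs2def
  have hs2 : 0 < s2 := by positivity
  have hlog2 : (0:ℝ) < Real.log 2 := Real.log_pos one_lt_two
  set A : ℝ := Real.sqrt (s2 * Real.log 2) with hAdef
  set B : ℝ := Real.sqrt s2 / (4 * Real.sqrt (Real.log 2)) with hBdef
  have hApos : 0 < A := Real.sqrt_pos.mpr (by positivity)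
  have hBpos : 0 < B := div_pos (Real.sqrt_pos.mpr hs2) (by positivity)
  have hA2 : A^2 = s2 * Real.log 2 := Real.sq_sqrt (by positivity)
  have hAB : A * B = s2 / 4 := by
    rw [hAdef, hBdef, Real.sqrt_mul hs2.le]
    have hl : Real.sqrt (Real.log 2) ≠ 0 := ne_of_gt (Real.sqrt_pos.mpr hlog2)
    have hss : Real.sqrt s2 * Real.sqrt s2 = s2 := Real.mul_self_sqrt hs2.le
    field_simp
    linear_combination hss
  -- eventual conditions
  have hT1 : Tendsto (fun x : ℝ => Real.log x / x) atTop (nhds 0) := by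
    simpa using Real.tendsto_pow_log_div_mul_add_atTop 1 0 1 one_ne_zero
  have hT2 : Tendsto (fun x : ℝ => (Real.log x)^2 / x) atTop (nhds 0) := by
    simpa using Real.tendsto_pow_log_div_mul_add_atTop 1 0 2 one_ne_zero
  have hN1 : Tendsto (fun n : ℕ => Real.log n / n) atTop (nhds 0) :=
    hT1.comp tendsto_natCast_atTop_atTop
  have hN2 : Tendsto (fun n : ℕ => (Real.log n)^2 / n) atTop (nhds 0) :=
    hT2.comp tendsto_natCast_atTop_atTop
  have hev1 : ∀ᶠ n : ℕ in atTop, Real.log n / n < A / B :=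
    hN1.eventually_lt_const (by positivity)
  set ε2 : ℝ := s2 / (2 * (B^2 + 1)) with hε2def
  have hε2pos : 0 < ε2 := by positivity
  have hev2 : ∀ᶠ n : ℕ in atTop, (Real.log n)^2 / n < ε2 :=
    hN2.eventually_lt_const hε2pos
  have hev3 : ∀ᶠ n : ℕ in atTop, (2:ℝ)/s2 ≤ (n:ℝ) :=
    tendsto_natCast_atTop_atTop.eventually_ge_atTop _
  have hev4 : ∀ᶠ n : ℕ in atTop, 1 ≤ n := eventually_ge_atTop 1
  have hev : ∀ᶠ n : ℕ in atTop,
      1 ≤ (n:ℝ) ∧ B * Real.log n ≤ A * n ∧ B^2 * (Real.log n)^2 + 1 ≤ s2 * n := by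
    filter_upwards [hev1, hev2, hev3, hev4] with n h1' h2' h3' h4'
    have hn1 : 1 ≤ (n:ℝ) := by exact_mod_cast h4'
    have hnpos : (0:ℝ) < n := lt_of_lt_of_le one_pos hn1
    refine ⟨hn1, ?_, ?_⟩
    · have := (div_lt_div_iff₀ hnpos hBpos).mp h1'
      nlinarith
    · have hL2 : (Real.log n)^2 < ε2 * n := by
        have := (div_lt_iff₀ hnpos).mp h2'
        linarith
      have hεid : ε2 * (2 * (B^2 + 1)) = s2 := by
        rw [hε2def]; field_simp
      have h2s : 2 ≤ s2 * n := by
        have := (div_le_iff₀ hs2).mp h3'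
        nlinarith
      nlinarith [mul_le_mul_of_nonneg_left hL2.le (sq_nonneg B), sq_nonneg B]
  obtain ⟨N0, hN0⟩ := eventually_atTop.mp hev
  refine ⟨Real.exp (-(2*A/s2) - 1) / Real.sqrt (Real.pi * s2), by positivity, N0, ?_⟩
  intro n hn _heven
  obtain ⟨hn1, hc2, hc3⟩ := hN0 n hn
  have hnpos : (0:ℝ) < n := lt_of_lt_of_le one_pos hn1
  set a : ℝ := A * n - B * Real.log n with hadef
  have ha0 : 0 ≤ a := by rw [hadef]; linarith
  have hvv : ((Real.toNNReal (s2 * n / 2) : NNReal) : ℝ) = s2 * n / 2 :=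
    Real.coe_toNNReal _ (by positivity)
  have hvne : Real.toNNReal (s2 * n / 2) ≠ 0 :=
    ne_of_gt (Real.toNNReal_pos.mpr (by positivity))
  set v : NNReal := Real.toNNReal (s2 * n / 2) with hvdef
  rw [gaussianReal_apply_eq_integral 0 hvne,
    ENNReal.toReal_ofReal (setIntegral_nonneg measurableSet_Icc
      (fun x _ => gaussianPDFReal_nonneg 0 v x))]
  have hmono : ∀ x ∈ Set.Icc a (a+1), gaussianPDFReal 0 v (a+1) ≤ gaussianPDFReal 0 v x := by
    intro x hx
    simp only [gaussianPDFReal]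
    refine mul_le_mul_of_nonneg_left (Real.exp_le_exp.mpr ?_) (by positivity)
    have h2v : (0:ℝ) < 2 * (v:ℝ) := by rw [hvv]; positivity
    rw [div_le_div_iff_of_pos_right h2v]
    have hx0 : 0 ≤ x := le_trans ha0 hx.1
    have hsq : x^2 ≤ (a+1)^2 := pow_le_pow_left₀ hx0 hx.2 2
    simp only [sub_zero]
    exact neg_le_neg hsq
  have hlow : gaussianPDFReal 0 v (a+1) * ((volume (Set.Icc a (a+1))).toReal)
      ≤ ∫ x in Set.Icc a (a+1), gaussianPDFReal 0 v x := by
    have := setIntegral_ge_of_const_le_real measurableSet_Icc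
      (by rw [Real.volume_Icc]; exact ENNReal.ofReal_ne_top) hmono
      ((integrable_gaussianPDFReal 0 v).integrableOn)
    rwa [measureReal_def] at this
  have hvol : (volume (Set.Icc a (a+1))).toReal = 1 := by
    rw [Real.volume_Icc]
    norm_num
  rw [hvol, mul_one] at hlow
  have hpdf : Real.exp (-(2*A/s2) - 1) / Real.sqrt (Real.pi * s2)
      ≤ (2:ℝ)^n * gaussianPDFReal 0 v (a+1) := by
    have hax := aux_ineq s2 A B hs2 hA2 hAB hBpos n hn1 hc3
    simp only [gaussianPDFReal, hvdef, hvv, hadef]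
    rw [Real.coe_toNNReal _ (by positivity)]
    exact hax
  calc Real.exp (-(2*A/s2) - 1) / Real.sqrt (Real.pi * s2)
      ≤ (2:ℝ)^n * gaussianPDFReal 0 v (a+1) := hpdf
    _ ≤ (2:ℝ)^n * ∫ x in Set.Icc a (a+1), gaussianPDFReal 0 v x :=
        mul_le_mul_of_nonneg_left hlow (by positivity)
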